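/- Let V_{x,θ}^δ := Σ_{z ∈ B_δ(x)} |z⟩⟨z|_θ denote the projector onto strings δn-close to x in basis θ. For any two distinct openings (x,θ) and (x',θ') such that d(z,z') ≥ d − 2δn for all z ∈ B_δ(x), z' ∈ B_δ(x') implies |⟨z|_θ |z'⟩_{θ'}| ≤ 2^{−(d−2δn)/2}, and for any density operator ρ_B: Tr(V_{x,θ}^δ ρ_B) + Tr(V_{x',θ'}^δ ρ_B) ≤ 1 + 2^{−d/2 + δn + h(δ)n}. Consequently the BCJL_δ scheme is 2^{−d/2+δn+h(δ)n}-binding against non-adaptive adversaries. -/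

import Mathlib

open scoped ComplexOrder
open Matrix Finset

noncomputable section

/-- Single-qubit amplitude `⟨c|b⟩_θ`: basis `θ = false` is computational, `θ = true` is
Hadamard (diagonal). -/
def qubitAmp (θb yb cb : Bool) : ℂ :=
  if θb then ((if yb && cb then -1 else 1) : ℂ) / (Real.sqrt 2 : ℂ)
  else if cb = yb then 1 else 0

/-- The state `|y⟩_θ` encoded qubit-wise in the bases given by `θ`. -/
def ketTheta {n : ℕ} (θ y : Fin n → Bool) : (Fin n → Bool) → ℂ :=
  fun c => ∏ i, qubitAmp (θ i) (y i) (c i)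

/-- The binary entropy function. -/
def binEnt (δ : ℝ) : ℝ := -δ * Real.logb 2 δ - (1 - δ) * Real.logb 2 (1 - δ)

/-- `V^δ_{x,θ} = Σ_{z ∈ B_δ(x)} |z⟩⟨z|_θ`: the projector onto strings `δn`-close to `x` in
basis `θ`. -/
def Vproj (n : ℕ) (δ : ℝ) (x θ : Fin n → Bool) :
    Matrix (Fin n → Bool) (Fin n → Bool) ℂ :=
  ∑ z ∈ Finset.univ.filter (fun z => ((hammingDist x z : ℝ) ≤ δ * n)),
    Matrix.vecMulVec (ketTheta θ z) (star (ketTheta θ z))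

namespace Stmt16

variable {n : ℕ}

/-- the complex absolute value, as a bundled absolute value -/
def Complex.abs : AbsoluteValue ℂ ℝ := IsAbsoluteValue.toAbsoluteValue (norm : ℂ → ℝ)

@[simp] lemma Complex.abs_apply' (z : ℂ) : Complex.abs z = ‖z‖ := rfl

lemma sqrt2_sq : (Real.sqrt 2 : ℂ) * (Real.sqrt 2 : ℂ) = 2 := by
  norm_cast
  exact Real.mul_self_sqrt (by norm_num)

lemma sqrt2_ne : (Real.sqrt 2 : ℂ) ≠ 0 := by
  intro h
  have := sqrt2_sq
  rw [h] at this
  norm_num at this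

lemma one_le_sqrt2 : 1 ≤ Real.sqrt 2 := by
  nlinarith [Real.mul_self_sqrt (by norm_num : (0:ℝ) ≤ 2), Real.sqrt_nonneg 2]

def qip (tb tb' yb yb' : Bool) : ℂ :=
  ∑ b : Bool, (starRingEnd ℂ) (qubitAmp tb yb b) * qubitAmp tb' yb' b

lemma qip_same (tb y y' : Bool) : qip tb tb y y' = if y = y' then 1 else 0 := by
  have h2 := sqrt2_ne
  cases tb <;> cases y <;> cases y' <;>
    simp [qip, qubitAmp, Fintype.sum_bool, map_div₀, Complex.conj_ofReal] <;>
    field_simp <;>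
    rw [sq, sqrt2_sq]
  all_goals norm_num

lemma abs_qip_le_one (tb tb' y y' : Bool) : Complex.abs (qip tb tb' y y') ≤ 1 := by
  have habs : |Real.sqrt 2| = Real.sqrt 2 := abs_of_nonneg (Real.sqrt_nonneg 2)
  have h1 := one_le_sqrt2
  have hz : ((Real.sqrt 2 : ℂ))⁻¹ * ((Real.sqrt 2:ℂ))⁻¹ = (2:ℂ)⁻¹ := by
    rw [← mul_inv, sqrt2_sq]
  cases tb <;> cases tb' <;> cases y <;> cases y' <;>
    simp [qip, qubitAmp, Fintype.sum_bool, map_div₀, Complex.conj_ofReal] <;>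
    try rw [habs]
  · exact inv_le_one_of_one_le₀ h1
  · exact inv_le_one_of_one_le₀ h1
  · exact inv_le_one_of_one_le₀ h1
  · exact inv_le_one_of_one_le₀ h1
  · exact inv_le_one_of_one_le₀ h1
  · exact inv_le_one_of_one_le₀ h1
  · exact inv_le_one_of_one_le₀ h1
  · exact inv_le_one_of_one_le₀ h1
  · rw [← mul_inv, Real.mul_self_sqrt (by norm_num : (0:ℝ) ≤ 2)]; norm_num
  · rw [neg_div, one_div,
      show ((Real.sqrt 2:ℂ))⁻¹ * -(Real.sqrt 2:ℂ)⁻¹ + ((Real.sqrt 2:ℂ))⁻¹ * ((Real.sqrt 2:ℂ))⁻¹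
        = 0 from by ring]
    simp
  · rw [neg_div, one_div,
      show -((Real.sqrt 2:ℂ))⁻¹ * ((Real.sqrt 2:ℂ))⁻¹ + ((Real.sqrt 2:ℂ))⁻¹ * ((Real.sqrt 2:ℂ))⁻¹
        = 0 from by ring]
    simp
  · rw [neg_div, one_div,
      show -((Real.sqrt 2:ℂ))⁻¹ * -((Real.sqrt 2:ℂ))⁻¹ + ((Real.sqrt 2:ℂ))⁻¹ * ((Real.sqrt 2:ℂ))⁻¹
        = ((Real.sqrt 2:ℂ))⁻¹ * ((Real.sqrt 2:ℂ))⁻¹ + ((Real.sqrt 2:ℂ))⁻¹ * ((Real.sqrt 2:ℂ))⁻¹ from by ring,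
      hz, show ((2:ℂ))⁻¹ + (2:ℂ)⁻¹ = 1 from by norm_num]
    simp

lemma abs_qip_le_of_ne (tb tb' : Bool) {y y' : Bool} (h : y ≠ y') :
    Complex.abs (qip tb tb' y y') ≤ (Real.sqrt 2)⁻¹ := by
  have habs : |Real.sqrt 2| = Real.sqrt 2 := abs_of_nonneg (Real.sqrt_nonneg 2)
  have hpos : (0:ℝ) ≤ (Real.sqrt 2)⁻¹ := by positivity
  cases tb <;> cases tb' <;> cases y <;> cases y' <;> simp_all <;>
    simp [qip, qubitAmp, Fintype.sum_bool, map_div₀, Complex.conj_ofReal] <;>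
    try rw [habs]
  · rw [abs_of_nonneg (Real.sqrt_nonneg 2)]
  · rw [abs_of_nonneg (Real.sqrt_nonneg 2)]
  · rw [abs_of_nonneg (Real.sqrt_nonneg 2)]
  · rw [abs_of_nonneg (Real.sqrt_nonneg 2)]
  · rw [neg_div, one_div,
      show ((Real.sqrt 2:ℂ))⁻¹ * -(Real.sqrt 2:ℂ)⁻¹ + ((Real.sqrt 2:ℂ))⁻¹ * ((Real.sqrt 2:ℂ))⁻¹
        = 0 from by ring]
    simpa using (by positivity : (0:ℝ) ≤ (Real.sqrt 2)⁻¹)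
  · rw [neg_div, one_div,
      show -((Real.sqrt 2:ℂ))⁻¹ * ((Real.sqrt 2:ℂ))⁻¹ + ((Real.sqrt 2:ℂ))⁻¹ * ((Real.sqrt 2:ℂ))⁻¹
        = 0 from by ring]
    simpa using (by positivity : (0:ℝ) ≤ (Real.sqrt 2)⁻¹)



lemma dot_ketTheta (θ θ' z z' : Fin n → Bool) :
    star (ketTheta θ z) ⬝ᵥ ketTheta θ' z' = ∏ i, qip (θ i) (θ' i) (z i) (z' i) := by
  have key : ∀ c : Fin n → Bool, star (ketTheta θ z) c * ketTheta θ' z' c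
      = ∏ i, ((starRingEnd ℂ) (qubitAmp (θ i) (z i) (c i)) * qubitAmp (θ' i) (z' i) (c i)) := by
    intro c
    simp only [Pi.star_apply, ketTheta, star_prod, Complex.star_def, ← Finset.prod_mul_distrib]
  unfold dotProduct
  simp only [key]
  unfold qip
  rw [Finset.prod_univ_sum]
  rw [Fintype.piFinset_univ]

lemma dot_ketTheta_same (θ z z' : Fin n → Bool) :
    star (ketTheta θ z) ⬝ᵥ ketTheta θ z' = if z = z' then 1 else 0 := by
  rw [dot_ketTheta]
  simp only [qip_same]
  rw [Finset.prod_boole]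
  by_cases h : z = z'
  · simp [h]
  · rw [if_neg h, if_neg (fun hall => h (funext fun i => hall i (Finset.mem_univ i)))]

lemma abs_dot_ketTheta_le (θ θ' z z' : Fin n → Bool) :
    Complex.abs (star (ketTheta θ z) ⬝ᵥ ketTheta θ' z')
      ≤ ((Real.sqrt 2)⁻¹) ^ (hammingDist z z') := by
  rw [dot_ketTheta, map_prod]
  calc ∏ i, Complex.abs (qip (θ i) (θ' i) (z i) (z' i))
      ≤ ∏ i, (if z i = z' i then (1:ℝ) else (Real.sqrt 2)⁻¹) := by
        apply Finset.prod_le_prod (fun i _ => AbsoluteValue.nonneg _ _)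
        intro i _
        by_cases h : z i = z' i
        · simpa [h] using abs_qip_le_one (θ i) (θ' i) (z i) (z' i)
        · simpa [h] using abs_qip_le_of_ne (θ i) (θ' i) h
    _ = ((Real.sqrt 2)⁻¹) ^ (hammingDist z z') := by
        rw [← Finset.prod_filter_mul_prod_filter_not univ (fun i => z i = z' i)]
        rw [Finset.prod_eq_one (fun i hi => if_pos (Finset.mem_filter.mp hi).2)]
        rw [one_mul]
        rw [Finset.prod_congr rfl (fun i hi => if_neg (Finset.mem_filter.mp hi).2)]
        rw [Finset.prod_const]
        rfl

def Umat (θ : Fin n → Bool) : Matrix (Fin n → Bool) (Fin n → Bool) ℂ :=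
  Matrix.of fun z c => ketTheta θ z c

lemma Umat_mul_conjTranspose (θ : Fin n → Bool) : Umat θ * (Umat θ)ᴴ = 1 := by
  ext z z'
  rw [Matrix.mul_apply, Matrix.one_apply]
  have key : ∀ j, Umat θ z j * (Umat θ)ᴴ j z'
      = (starRingEnd ℂ) ((starRingEnd ℂ) (ketTheta θ z j) * ketTheta θ z' j) := by
    intro j
    simp only [Umat, Matrix.conjTranspose_apply, Matrix.of_apply, _root_.map_mul,
      Complex.conj_conj, Complex.star_def]
    try ring
  simp only [key]
  rw [← map_sum]
  have hd := dot_ketTheta_same θ z z'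
  unfold dotProduct at hd
  simp only [Pi.star_apply, Complex.star_def] at hd
  rw [hd]
  by_cases h : z = z' <;> simp [h]

lemma completeness (θ : Fin n → Bool) (c c' : Fin n → Bool) :
    ∑ z, (starRingEnd ℂ) (ketTheta θ z c) * ketTheta θ z c'
      = if c = c' then 1 else 0 := by
  have h2 : (Umat θ)ᴴ * Umat θ = 1 := mul_eq_one_comm.mp (Umat_mul_conjTranspose θ)
  have h3 : ((Umat θ)ᴴ * Umat θ) c c' = (1 : Matrix (Fin n → Bool) (Fin n → Bool) ℂ) c c' := by
    rw [h2]
  rw [Matrix.mul_apply, Matrix.one_apply] at h3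
  simpa [Umat, Matrix.conjTranspose_apply] using h3

lemma parseval (θ : Fin n → Bool) (w : (Fin n → Bool) → ℂ) :
    ∑ z, Complex.normSq (star (ketTheta θ z) ⬝ᵥ w) = ∑ c, Complex.normSq (w c) := by
  have hC : ∑ z, ((Complex.normSq (star (ketTheta θ z) ⬝ᵥ w) : ℂ))
      = ∑ c, (Complex.normSq (w c) : ℂ) := by
    simp only [← Complex.mul_conj]
    have expand : ∀ z, (star (ketTheta θ z) ⬝ᵥ w) * (starRingEnd ℂ) (star (ketTheta θ z) ⬝ᵥ w)
        = ∑ c, ∑ c', ((starRingEnd ℂ) (ketTheta θ z c) * ketTheta θ z c')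
            * (w c * (starRingEnd ℂ) (w c')) := by
      intro z
      unfold dotProduct
      rw [map_sum, Finset.sum_mul_sum]
      apply Finset.sum_congr rfl; intro c _
      apply Finset.sum_congr rfl; intro c' _
      simp only [Pi.star_apply, Complex.star_def, _root_.map_mul, Complex.conj_conj]
      ring
    simp only [expand]
    rw [Finset.sum_comm]
    have swap2 : ∀ c, ∑ z, ∑ c', ((starRingEnd ℂ) (ketTheta θ z c) * ketTheta θ z c')
            * (w c * (starRingEnd ℂ) (w c'))
        = ∑ c', (∑ z, (starRingEnd ℂ) (ketTheta θ z c) * ketTheta θ z c')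
            * (w c * (starRingEnd ℂ) (w c')) := by
      intro c
      rw [Finset.sum_comm]
      apply Finset.sum_congr rfl; intro c' _
      rw [← Finset.sum_mul]
    simp only [swap2, completeness]
    apply Finset.sum_congr rfl; intro c _
    simp [Finset.sum_ite_eq' , mul_comm]
  exact_mod_cast hC

lemma bessel (θ : Fin n → Bool) (w : (Fin n → Bool) → ℂ) (s : Finset (Fin n → Bool)) :
    ∑ z ∈ s, Complex.normSq (star (ketTheta θ z) ⬝ᵥ w) ≤ ∑ c, Complex.normSq (w c) := by
  rw [← parseval θ w]
  exact Finset.sum_le_sum_of_subset_of_nonneg (Finset.subset_univ s)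
    (fun _ _ _ => Complex.normSq_nonneg _)


/-- the ball projector -/
def Vb (θ : Fin n → Bool) (s : Finset (Fin n → Bool)) :
    Matrix (Fin n → Bool) (Fin n → Bool) ℂ :=
  ∑ z ∈ s, Matrix.vecMulVec (ketTheta θ z) (star (ketTheta θ z))

lemma Vb_mulVec (θ : Fin n → Bool) (s : Finset (Fin n → Bool)) (w : (Fin n → Bool) → ℂ) :
    (Vb θ s) *ᵥ w = fun c => ∑ z ∈ s, (star (ketTheta θ z) ⬝ᵥ w) * ketTheta θ z c := by
  funext c
  simp only [Vb, Matrix.mulVec, dotProduct, Finset.sum_apply, Matrix.sum_apply,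
    Matrix.vecMulVec_apply, Finset.sum_mul]
  rw [Finset.sum_comm]
  apply Finset.sum_congr rfl; intro z _
  apply Finset.sum_congr rfl; intro c' _
  ring

lemma dot_sum_comb (u : (Fin n → Bool) → ℂ) (s : Finset (Fin n → Bool))
    (t : (Fin n → Bool) → ℂ) (θ : Fin n → Bool) :
    star u ⬝ᵥ (fun c => ∑ z ∈ s, t z * ketTheta θ z c)
      = ∑ z ∈ s, t z * (star u ⬝ᵥ ketTheta θ z) := by
  simp only [dotProduct, Finset.mul_sum]
  rw [Finset.sum_comm]
  apply Finset.sum_congr rfl; intro z _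
  apply Finset.sum_congr rfl; intro c _
  ring

lemma nsq_coords (θ : Fin n → Bool) (s : Finset (Fin n → Bool)) (f : (Fin n → Bool) → ℂ) :
    ∑ c, Complex.normSq (∑ z ∈ s, f z * ketTheta θ z c) = ∑ z ∈ s, Complex.normSq (f z) := by
  have hC : ∑ c, ((Complex.normSq (∑ z ∈ s, f z * ketTheta θ z c) : ℂ))
      = ∑ z ∈ s, (Complex.normSq (f z) : ℂ) := by
    simp only [← Complex.mul_conj]
    have expand : ∀ c, (∑ z ∈ s, f z * ketTheta θ z c)
          * (starRingEnd ℂ) (∑ z ∈ s, f z * ketTheta θ z c)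
        = ∑ z ∈ s, ∑ z' ∈ s, (f z * (starRingEnd ℂ) (f z'))
            * (ketTheta θ z c * (starRingEnd ℂ) (ketTheta θ z' c)) := by
      intro c
      rw [map_sum, Finset.sum_mul_sum]
      apply Finset.sum_congr rfl; intro z _
      apply Finset.sum_congr rfl; intro z' _
      simp only [_root_.map_mul]
      ring
    simp only [expand]
    rw [Finset.sum_comm]
    have inner : ∀ z ∈ s, ∑ c, ∑ z' ∈ s, (f z * (starRingEnd ℂ) (f z'))
            * (ketTheta θ z c * (starRingEnd ℂ) (ketTheta θ z' c))
        = ∑ z' ∈ s, (f z * (starRingEnd ℂ) (f z'))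
            * (starRingEnd ℂ) (star (ketTheta θ z) ⬝ᵥ ketTheta θ z') := by
      intro z _
      rw [Finset.sum_comm]
      apply Finset.sum_congr rfl; intro z' _
      rw [← Finset.mul_sum]
      congr 1
      unfold dotProduct
      rw [map_sum]
      apply Finset.sum_congr rfl; intro c _
      simp only [Pi.star_apply, Complex.star_def, _root_.map_mul, Complex.conj_conj]
    rw [Finset.sum_congr rfl inner]
    apply Finset.sum_congr rfl; intro z hz
    rw [Finset.sum_congr rfl (fun z' _ => by rw [dot_ketTheta_same θ z z'])]
    simp only [apply_ite (starRingEnd ℂ), _root_.map_one, _root_.map_zero,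
      mul_ite, mul_one, mul_zero]
    rw [Finset.sum_ite_eq s z (fun z' => f z * (starRingEnd ℂ) (f z'))]
    simp [hz]
  exact_mod_cast hC

lemma Vb_idem_mulVec (θ : Fin n → Bool) (s : Finset (Fin n → Bool)) (w : (Fin n → Bool) → ℂ) :
    Vb θ s *ᵥ (Vb θ s *ᵥ w) = Vb θ s *ᵥ w := by
  rw [Vb_mulVec θ s w, Vb_mulVec θ s]
  funext c
  apply Finset.sum_congr rfl; intro z hz
  congr 1
  rw [dot_sum_comb]
  rw [Finset.sum_congr rfl (fun z' _ => by rw [dot_ketTheta_same θ z z'])]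
  simp only [mul_ite, mul_one, mul_zero]
  rw [Finset.sum_ite_eq s z (fun z' => star (ketTheta θ z') ⬝ᵥ w)]
  simp [hz]

lemma nsq_Vb_le (θ : Fin n → Bool) (s : Finset (Fin n → Bool)) (w : (Fin n → Bool) → ℂ) :
    ∑ c, Complex.normSq ((Vb θ s *ᵥ w) c) ≤ ∑ c, Complex.normSq (w c) := by
  rw [Vb_mulVec, nsq_coords]
  exact bessel θ w s

lemma nsq_VbVb_le (θ θ' : Fin n → Bool) (s s' : Finset (Fin n → Bool))
    (w : (Fin n → Bool) → ℂ) (γ : ℝ) (hγ : 0 ≤ γ)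
    (hg : ∀ z ∈ s, ∀ z' ∈ s',
      Complex.abs (star (ketTheta θ z) ⬝ᵥ ketTheta θ' z') ≤ γ) :
    ∑ c, Complex.normSq ((Vb θ s *ᵥ (Vb θ' s' *ᵥ w)) c)
      ≤ γ^2 * s.card * s'.card * ∑ c, Complex.normSq (w c) := by
  rw [Vb_mulVec θ' s' w, Vb_mulVec θ s, nsq_coords]
  have key : ∀ z ∈ s,
      Complex.normSq (star (ketTheta θ z) ⬝ᵥ
        (fun c => ∑ z' ∈ s', (star (ketTheta θ' z') ⬝ᵥ w) * ketTheta θ' z' c))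
      ≤ γ^2 * s'.card * ∑ c, Complex.normSq (w c) := by
    intro z hz
    rw [dot_sum_comb]
    set b : (Fin n → Bool) → ℂ := fun z' => star (ketTheta θ' z') ⬝ᵥ w with hb
    set g : (Fin n → Bool) → ℂ := fun z' => star (ketTheta θ z) ⬝ᵥ ketTheta θ' z' with hgdef
    have h1 : Complex.abs (∑ z' ∈ s', b z' * g z') ≤ ∑ z' ∈ s', Complex.abs (g z') * Complex.abs (b z') := by
      refine (Complex.abs.sum_le _ _).trans ?_
      apply Finset.sum_le_sum; intro z' _
      rw [_root_.map_mul, mul_comm]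
    have h2 : (∑ z' ∈ s', Complex.abs (g z') * Complex.abs (b z'))^2
        ≤ (∑ z' ∈ s', Complex.abs (g z')^2) * (∑ z' ∈ s', Complex.abs (b z')^2) :=
      Finset.sum_mul_sq_le_sq_mul_sq s' _ _
    have h3 : ∑ z' ∈ s', Complex.abs (g z')^2 ≤ s'.card * γ^2 := by
      have := Finset.sum_le_card_nsmul s' (fun z' => Complex.abs (g z')^2) (γ^2)
        (fun z' hz' => by
          exact pow_le_pow_left₀ (Complex.abs.nonneg _) (hg z hz z' hz') 2)
      simpa [nsmul_eq_mul] using this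
    have h4 : ∑ z' ∈ s', Complex.abs (b z')^2 ≤ ∑ c, Complex.normSq (w c) := by
      have : ∀ z', Complex.abs (b z')^2 = Complex.normSq (b z') := fun z' => Complex.sq_norm _
      simp only [this]
      exact bessel θ' w s'
    have habs : Complex.normSq (∑ z' ∈ s', b z' * g z')
        = Complex.abs (∑ z' ∈ s', b z' * g z')^2 := (Complex.sq_norm _).symm
    rw [habs]
    calc Complex.abs (∑ z' ∈ s', b z' * g z')^2
        ≤ (∑ z' ∈ s', Complex.abs (g z') * Complex.abs (b z'))^2 := by
          apply pow_le_pow_left₀ (Complex.abs.nonneg _) h1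
      _ ≤ (∑ z' ∈ s', Complex.abs (g z')^2) * (∑ z' ∈ s', Complex.abs (b z')^2) := h2
      _ ≤ (s'.card * γ^2) * (∑ c, Complex.normSq (w c)) := by
          apply mul_le_mul h3 h4 (Finset.sum_nonneg fun _ _ => sq_nonneg _)
          positivity
      _ = γ^2 * s'.card * ∑ c, Complex.normSq (w c) := by ring
  calc ∑ z ∈ s, Complex.normSq (star (ketTheta θ z) ⬝ᵥ
        (fun c => ∑ z' ∈ s', (star (ketTheta θ' z') ⬝ᵥ w) * ketTheta θ' z' c))
      ≤ s.card * (γ^2 * s'.card * ∑ c, Complex.normSq (w c)) := by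
        have := Finset.sum_le_card_nsmul s _ _ key
        simpa [nsmul_eq_mul] using this
    _ = γ^2 * s.card * s'.card * ∑ c, Complex.normSq (w c) := by ring


abbrev nsq (w : (Fin n → Bool) → ℂ) : ℝ := ∑ c, Complex.normSq (w c)

lemma nsq_nonneg (w : (Fin n → Bool) → ℂ) : 0 ≤ nsq w :=
  Finset.sum_nonneg fun _ _ => Complex.normSq_nonneg _

lemma nsq_pos {w : (Fin n → Bool) → ℂ} (hw : w ≠ 0) : 0 < nsq w := by
  obtain ⟨c, hc⟩ := Function.ne_iff.mp hw
  have h1 : 0 < Complex.normSq (w c) := by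
    simpa [Complex.normSq_pos] using hc
  exact lt_of_lt_of_le h1 (Finset.single_le_sum (fun _ _ => Complex.normSq_nonneg _)
    (Finset.mem_univ c))

lemma nsq_eq_zero {w : (Fin n → Bool) → ℂ} (hw : nsq w = 0) : w = 0 := by
  by_contra h
  exact absurd hw (ne_of_gt (nsq_pos h))

lemma nsq_real_smul (r : ℝ) (w : (Fin n → Bool) → ℂ) :
    nsq ((r : ℂ) • w) = r^2 * nsq w := by
  unfold nsq
  rw [Finset.mul_sum]
  apply Finset.sum_congr rfl; intro c _
  simp [Complex.normSq_mul, Complex.normSq_ofReal, sq]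

/-- The eigenvalue bound for a sum of two "projector-like" matrices whose product is small. -/
lemma eig_le (P Q : Matrix (Fin n → Bool) (Fin n → Bool) ℂ)
    (hP2 : ∀ w, P *ᵥ (P *ᵥ w) = P *ᵥ w)
    (hQ2 : ∀ w, Q *ᵥ (Q *ᵥ w) = Q *ᵥ w)
    (hPc : ∀ w, nsq (P *ᵥ w) ≤ nsq w)
    (hQc : ∀ w, nsq (Q *ᵥ w) ≤ nsq w)
    (ε : ℝ) (hε : 0 ≤ ε)
    (hPQ : ∀ w, nsq (P *ᵥ (Q *ᵥ w)) ≤ ε^2 * nsq w)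
    (hQP : ∀ w, nsq (Q *ᵥ (P *ᵥ w)) ≤ ε^2 * nsq w)
    (u : (Fin n → Bool) → ℂ) (hu : u ≠ 0) (lam : ℝ)
    (heig : (P + Q) *ᵥ u = (lam : ℂ) • u) : lam ≤ 1 + ε := by
  set a := P *ᵥ u with ha
  set b := Q *ᵥ u with hb
  have hab : a + b = (lam : ℂ) • u := by rw [ha, hb, ← Matrix.add_mulVec, heig]
  have hNu : 0 < nsq u := nsq_pos hu
  have hPb : P *ᵥ b = ((lam - 1 : ℝ) : ℂ) • a := by
    have h1 : P *ᵥ (a + b) = P *ᵥ ((lam : ℂ) • u) := by rw [hab]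
    rw [Matrix.mulVec_add, Matrix.mulVec_smul, ha, hP2] at h1
    have h3 : P *ᵥ b = (lam : ℂ) • a - a := eq_sub_of_add_eq' h1
    rw [h3]
    push_cast
    rw [sub_smul, one_smul]
  have hQa : Q *ᵥ a = ((lam - 1 : ℝ) : ℂ) • b := by
    have h1 : Q *ᵥ (a + b) = Q *ᵥ ((lam : ℂ) • u) := by rw [hab]
    rw [Matrix.mulVec_add, Matrix.mulVec_smul, hb, hQ2] at h1
    have h3 : Q *ᵥ a = (lam : ℂ) • b - b := eq_sub_of_add_eq h1
    rw [h3]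
    push_cast
    rw [sub_smul, one_smul]
  -- key inequalities
  have key1 : (lam - 1)^2 * nsq a ≤ ε^2 * nsq b := by
    have h1 : P *ᵥ (Q *ᵥ b) = ((lam - 1 : ℝ) : ℂ) • a := by
      have : Q *ᵥ b = b := by rw [hb, hQ2]
      rw [this, hPb]
    have := hPQ b
    rw [h1, nsq_real_smul] at this
    exact this
  have key2 : (lam - 1)^2 * nsq b ≤ ε^2 * nsq a := by
    have h1 : Q *ᵥ (P *ᵥ a) = ((lam - 1 : ℝ) : ℂ) • b := by
      have : P *ᵥ a = a := by rw [ha, hP2]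
      rw [this, hQa]
    have := hQP a
    rw [h1, nsq_real_smul] at this
    exact this
  by_cases hA : nsq a = 0
  · -- a = 0, so b = lam • u and |lam| ≤ 1
    have ha0 : a = 0 := nsq_eq_zero hA
    have hbu : b = (lam : ℂ) • u := by rwa [ha0, zero_add] at hab
    have : nsq b ≤ nsq u := by rw [hb]; exact hQc u
    rw [hbu, nsq_real_smul] at this
    nlinarith
  by_cases hB : nsq b = 0
  · have hb0 : b = 0 := nsq_eq_zero hB
    have hau : a = (lam : ℂ) • u := by rwa [hb0, add_zero] at hab
    have : nsq a ≤ nsq u := by rw [ha]; exact hPc u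
    rw [hau, nsq_real_smul] at this
    nlinarith
  · have hA' : 0 < nsq a := lt_of_le_of_ne (nsq_nonneg a) (Ne.symm hA)
    have hB' : 0 < nsq b := lt_of_le_of_ne (nsq_nonneg b) (Ne.symm hB)
    have hprod2 := mul_le_mul key1 key2 (by positivity) (by positivity)
    have ht : 0 < nsq a * nsq b := mul_pos hA' hB'
    have h4 : ((lam-1)^2)^2 ≤ (ε^2)^2 := by nlinarith [ht, hprod2]
    have h5 : (lam-1)^2 ≤ ε^2 := by nlinarith [sq_nonneg (lam-1), sq_nonneg ε, h4]
    nlinarith [h5, hε]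


lemma quadform_le (M : Matrix (Fin n → Bool) (Fin n → Bool) ℂ) (hM : M.IsHermitian)
    (κ : ℝ) (hκ : 0 ≤ κ)
    (hbound : ∀ (u : (Fin n → Bool) → ℂ), u ≠ 0 → ∀ lam : ℝ,
      M *ᵥ u = (lam : ℂ) • u → lam ≤ κ)
    (ψ : (Fin n → Bool) → ℂ) :
    (star ψ ⬝ᵥ (M *ᵥ ψ)).re ≤ κ * nsq ψ := by
  have heval : ∀ j, hM.eigenvalues j ≤ κ := by
    intro j
    have heig := hM.mulVec_eigenvectorBasis j
    have hne : ⇑(hM.eigenvectorBasis j) ≠ 0 := by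
      intro h0
      have hnorm := hM.eigenvectorBasis.orthonormal.1 j
      have : (hM.eigenvectorBasis j : EuclideanSpace ℂ (Fin n → Bool)) = 0 := by
        apply PiLp.ext; intro i; exact congrFun h0 i
      rw [this] at hnorm
      simp at hnorm
    apply hbound _ hne _
    rw [heig]
    funext c
    simp [Complex.real_smul]
  set U : Matrix (Fin n → Bool) (Fin n → Bool) ℂ := ((Matrix.IsHermitian.eigenvectorUnitary hM : Matrix.unitaryGroup (Fin n → Bool) ℂ) : Matrix (Fin n → Bool) (Fin n → Bool) ℂ)
    with hU
  have hUU : U * star U = 1 := (Matrix.mem_unitaryGroup_iff).mp (Matrix.IsHermitian.eigenvectorUnitary hM).2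
  set y : (Fin n → Bool) → ℂ := (star U) *ᵥ ψ with hy
  have hstary : star y = star ψ ᵥ* U := by
    rw [hy, Matrix.star_mulVec, Matrix.star_eq_conjTranspose, Matrix.conjTranspose_conjTranspose]
  have step1 : star ψ ⬝ᵥ (M *ᵥ ψ)
      = star y ⬝ᵥ ((Matrix.diagonal (RCLike.ofReal ∘ hM.eigenvalues)) *ᵥ y) := by
    conv_lhs => rw [hM.spectral_theorem, Unitary.conjStarAlgAut_apply]
    rw [← Matrix.mulVec_mulVec, ← Matrix.mulVec_mulVec]
    rw [dotProduct_mulVec (star ψ) U, ← hstary, hy]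
  have step2 : star y ⬝ᵥ ((Matrix.diagonal (RCLike.ofReal ∘ hM.eigenvalues)) *ᵥ y)
      = ∑ j, (((hM.eigenvalues j * Complex.normSq (y j) : ℝ)) : ℂ) := by
    unfold dotProduct
    apply Finset.sum_congr rfl; intro j _
    rw [Matrix.mulVec_diagonal]
    simp only [Pi.star_apply, Complex.star_def, Function.comp_apply]
    have hcast : (RCLike.ofReal (hM.eigenvalues j) : ℂ) = ((hM.eigenvalues j : ℂ)) := rfl
    rw [hcast, show (starRingEnd ℂ) (y j) * ((hM.eigenvalues j : ℂ) * y j)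
      = (hM.eigenvalues j : ℂ) * ((y j) * (starRingEnd ℂ) (y j)) from by ring, Complex.mul_conj]
    push_cast
    ring
  have step4 : ∑ j, Complex.normSq (y j) = nsq ψ := by
    have hC : ∑ j, (Complex.normSq (y j) : ℂ) = ∑ c, (Complex.normSq (ψ c) : ℂ) := by
      have l1 : ∑ j, (Complex.normSq (y j) : ℂ) = star y ⬝ᵥ y := by
        unfold dotProduct
        apply Finset.sum_congr rfl; intro j _
        simp only [Pi.star_apply, Complex.star_def]
        rw [show (starRingEnd ℂ) (y j) * y j = y j * (starRingEnd ℂ) (y j) from by ring,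
          Complex.mul_conj]
      have l2 : star ψ ⬝ᵥ ψ = ∑ c, (Complex.normSq (ψ c) : ℂ) := by
        unfold dotProduct
        apply Finset.sum_congr rfl; intro c _
        simp only [Pi.star_apply, Complex.star_def]
        rw [show (starRingEnd ℂ) (ψ c) * ψ c = ψ c * (starRingEnd ℂ) (ψ c) from by ring,
          Complex.mul_conj]
      rw [l1, hstary, hy, dotProduct_mulVec, Matrix.vecMul_vecMul, hUU,
        Matrix.vecMul_one, l2]
    exact_mod_cast hC
  rw [step1, step2]
  have : (∑ j, (((hM.eigenvalues j * Complex.normSq (y j) : ℝ)) : ℂ)).re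
      = ∑ j, hM.eigenvalues j * Complex.normSq (y j) := by
    rw [← Complex.ofReal_sum, Complex.ofReal_re]
  rw [this]
  calc ∑ j, hM.eigenvalues j * Complex.normSq (y j)
      ≤ ∑ j, κ * Complex.normSq (y j) := by
        apply Finset.sum_le_sum; intro j _
        exact mul_le_mul_of_nonneg_right (heval j) (Complex.normSq_nonneg _)
    _ = κ * ∑ j, Complex.normSq (y j) := by rw [Finset.mul_sum]
    _ = κ * nsq ψ := by rw [step4]

lemma trace_le (M : Matrix (Fin n → Bool) (Fin n → Bool) ℂ) (κ : ℝ)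
    (hq : ∀ ψ : (Fin n → Bool) → ℂ, (star ψ ⬝ᵥ (M *ᵥ ψ)).re ≤ κ * nsq ψ)
    (ρ : Matrix (Fin n → Bool) (Fin n → Bool) ℂ)
    (hρ : ρ.PosSemidef) (htr : ρ.trace = 1) :
    (M * ρ).trace.re ≤ κ := by
  obtain ⟨B, hB⟩ : ∃ B : Matrix (Fin n → Bool) (Fin n → Bool) ℂ, ρ = Bᴴ * B := by
    open scoped MatrixOrder in
    exact CStarAlgebra.nonneg_iff_eq_star_mul_self.mp hρ.nonneg
  subst hB
  have hcyc : (M * (Bᴴ * B)).trace = (B * M * Bᴴ).trace := by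
    rw [← Matrix.mul_assoc, Matrix.trace_mul_comm, ← Matrix.mul_assoc]
  have hdiag : ∀ k, (B * M * Bᴴ) k k = star (star (B k)) ⬝ᵥ (M *ᵥ star (B k)) := by
    intro k
    have h1 : (B * M * Bᴴ) k k = ∑ c', ∑ c, B k c * M c c' * star (B k c') := by
      rw [Matrix.mul_apply]
      apply Finset.sum_congr rfl; intro c' _
      rw [Matrix.mul_apply, Finset.sum_mul]
      apply Finset.sum_congr rfl; intro c _
      rw [Matrix.conjTranspose_apply]
    rw [h1, Finset.sum_comm]
    simp only [star_star, Matrix.mulVec, dotProduct, Pi.star_apply, Finset.mul_sum]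
    apply Finset.sum_congr rfl; intro c _
    apply Finset.sum_congr rfl; intro c' _
    ring
  have htr' : ∑ k, nsq (star (B k)) = 1 := by
    have h1 : (Bᴴ * B).trace = ∑ c, ∑ k, ((Complex.normSq (B k c) : ℂ)) := by
      unfold Matrix.trace Matrix.diag
      apply Finset.sum_congr rfl; intro c _
      rw [Matrix.mul_apply]
      apply Finset.sum_congr rfl; intro k _
      rw [Matrix.conjTranspose_apply]
      rw [show star (B k c) * B k c = B k c * star (B k c) from mul_comm _ _]
      simp only [Complex.star_def, Complex.mul_conj]
    have h2 : ((∑ c, ∑ k, Complex.normSq (B k c) : ℝ) : ℂ) = 1 := by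
      push_cast
      rw [← h1, htr]
    have h3 : (∑ c, ∑ k, Complex.normSq (B k c) : ℝ) = 1 := by
      exact_mod_cast h2
    have h4 : ∑ k, nsq (star (B k)) = ∑ c, ∑ k, Complex.normSq (B k c) := by
      rw [Finset.sum_comm]
      apply Finset.sum_congr rfl; intro k _
      apply Finset.sum_congr rfl; intro c _
      simp [Complex.normSq_conj]
    rw [h4, h3]
  rw [hcyc]
  unfold Matrix.trace Matrix.diag
  rw [Complex.re_sum]
  calc ∑ k, ((B * M * Bᴴ) k k).re
      ≤ ∑ k, κ * nsq (star (B k)) := by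
        apply Finset.sum_le_sum; intro k _
        rw [hdiag k]
        exact hq (star (B k))
    _ = κ * ∑ k, nsq (star (B k)) := by rw [Finset.mul_sum]
    _ = κ := by rw [htr', mul_one]

lemma inv_sqrt2_pow (k : ℕ) : ((Real.sqrt 2)⁻¹ : ℝ) ^ k = (2:ℝ) ^ (-(k:ℝ)/2) := by
  have h1 : ((Real.sqrt 2)⁻¹ : ℝ) = (2:ℝ) ^ (-(1/2) : ℝ) := by
    rw [Real.sqrt_eq_rpow, ← Real.rpow_neg (by norm_num)]
  rw [h1, ← Real.rpow_natCast ((2:ℝ) ^ (-(1/2) : ℝ)) k, ← Real.rpow_mul (by norm_num)]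
  congr 1
  ring

lemma overlap_bound {d : ℕ} (δ : ℝ) (x x' θ θ' z z' : Fin n → Bool)
    (hd : d ≤ hammingDist x x')
    (hz : (hammingDist x z : ℝ) ≤ δ * n) (hz' : (hammingDist x' z' : ℝ) ≤ δ * n) :
    Complex.abs (star (ketTheta θ z) ⬝ᵥ ketTheta θ' z')
      ≤ (2:ℝ) ^ (-((d:ℝ) - 2 * (δ * n))/2) := by
  refine (abs_dot_ketTheta_le θ θ' z z').trans ?_
  rw [inv_sqrt2_pow]
  have hk : (d:ℝ) - 2 * (δ * n) ≤ (hammingDist z z' : ℝ) := by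
    have t1 : hammingDist x x' ≤ hammingDist x z + hammingDist z x' := hammingDist_triangle x z x'
    have t2 : hammingDist z x' ≤ hammingDist z z' + hammingDist z' x' :=
      hammingDist_triangle z z' x'
    have t3 : hammingDist z' x' = hammingDist x' z' := hammingDist_comm z' x'
    have hdr : (d:ℝ) ≤ (hammingDist x x' : ℝ) := by exact_mod_cast hd
    have t1r : (hammingDist x x' : ℝ) ≤ (hammingDist x z : ℝ) + (hammingDist z x' : ℝ) := by
      exact_mod_cast t1
    have t2r : (hammingDist z x' : ℝ) ≤ (hammingDist z z' : ℝ) + (hammingDist z' x' : ℝ) := by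
      exact_mod_cast t2
    have t3r : (hammingDist z' x' : ℝ) = (hammingDist x' z' : ℝ) := by exact_mod_cast t3
    linarith
  rw [Real.rpow_le_rpow_left_iff (by norm_num : (1:ℝ) < 2)]
  linarith

lemma ball_card_le (δ : ℝ) (hδ0 : 0 ≤ δ) (hδ : δ ≤ 1/2) (x : Fin n → Bool) :
    (((Finset.univ.filter (fun z => ((hammingDist x z : ℝ) ≤ δ * n))).card : ℝ))
      ≤ (2:ℝ) ^ (binEnt δ * n) := by
  rcases eq_or_lt_of_le hδ0 with hδz | hδpos
  · -- δ = 0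
    have hfil : (Finset.univ.filter (fun z : Fin n → Bool =>
        ((hammingDist x z : ℝ) ≤ δ * n))) = {x} := by
      ext z
      simp only [Finset.mem_filter, Finset.mem_univ, true_and, Finset.mem_singleton]
      constructor
      · intro h
        rw [← hδz] at h
        simp only [zero_mul] at h
        have : hammingDist x z = 0 := by
          have h0 : (0:ℝ) ≤ (hammingDist x z : ℝ) := by positivity
          have := le_antisymm h h0
          exact_mod_cast this
        exact (hammingDist_eq_zero.mp this).symm
      · intro h
        subst h
        simp [hammingDist_self]
        positivity
    rw [hfil]
    have hbe : binEnt δ = 0 := by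
      rw [← hδz]
      simp [binEnt]
    rw [hbe, zero_mul, Real.rpow_zero]
    simp
  · -- 0 < δ
    have hδ1 : δ < 1 := lt_of_le_of_lt hδ (by norm_num)
    have h1δ : 0 < 1 - δ := by linarith
    set W : (Fin n → Bool) → ℝ := fun z => ∏ i, (if x i = z i then (1 - δ) else δ) with hW
    have hWsum : ∑ z, W z = 1 := by
      have := Finset.prod_univ_sum (fun _ : Fin n => (univ : Finset Bool))
        (fun i b => if x i = b then (1 - δ) else δ)
      rw [Fintype.piFinset_univ] at this
      have h2 : ∑ z, W z = ∏ i, ∑ b : Bool, (if x i = b then (1 - δ) else δ) := by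
        rw [this]
      rw [h2]
      rw [Finset.prod_eq_one]
      intro i _
      cases hxi : x i <;> simp [Fintype.sum_bool, hxi] <;> ring
    have hWnn : ∀ z, 0 ≤ W z := by
      intro z
      apply Finset.prod_nonneg
      intro i _
      split <;> linarith
    have hWeq : ∀ z, W z = δ ^ (hammingDist x z) * (1 - δ) ^ (n - hammingDist x z) := by
      intro z
      rw [hW]
      simp only []
      rw [← Finset.prod_filter_mul_prod_filter_not univ (fun i => x i = z i)]
      have e1 : ∏ i ∈ univ.filter (fun i => x i = z i), (if x i = z i then (1-δ) else δ)
          = (1 - δ) ^ (univ.filter (fun i => x i = z i)).card := by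
        rw [Finset.prod_congr rfl (fun i hi => if_pos (Finset.mem_filter.mp hi).2),
          Finset.prod_const]
      have e2 : ∏ i ∈ univ.filter (fun i => ¬ x i = z i), (if x i = z i then (1-δ) else δ)
          = δ ^ (univ.filter (fun i => ¬ x i = z i)).card := by
        rw [Finset.prod_congr rfl (fun i hi => if_neg (Finset.mem_filter.mp hi).2),
          Finset.prod_const]
      have hcard : (univ.filter (fun i => ¬ x i = z i)).card = hammingDist x z := rfl
      have hcard2 : (univ.filter (fun i => x i = z i)).card = n - hammingDist x z := by
        have := Finset.card_filter_add_card_filter_not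
          (s := (univ : Finset (Fin n))) (p := fun i => x i = z i)
        simp only [Finset.card_univ, Fintype.card_fin] at this
        omega
      rw [e1, e2, hcard, hcard2]
      ring
    have hk_le_n : ∀ z : Fin n → Bool, hammingDist x z ≤ n := by
      intro z
      have := hammingDist_le_card_fintype (x := x) (y := z)
      simpa using this
    have hWge : ∀ z ∈ Finset.univ.filter (fun z => ((hammingDist x z : ℝ) ≤ δ * n)),
        (2:ℝ) ^ (-(binEnt δ * n)) ≤ W z := by
      intro z hzmem
      have hzk : ((hammingDist x z : ℕ) : ℝ) ≤ δ * n := (Finset.mem_filter.mp hzmem).2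
      set k := hammingDist x z with hkdef
      have hkn := hk_le_n z
      set L : ℝ := Real.logb 2 δ with hLdef
      set L' : ℝ := Real.logb 2 (1 - δ) with hL'def
      have hδe : δ = (2:ℝ) ^ L := (Real.rpow_logb (by norm_num) (by norm_num) hδpos).symm
      have h1δe : (1 - δ) = (2:ℝ) ^ L' :=
        (Real.rpow_logb (by norm_num) (by norm_num) h1δ).symm
      have hWz : W z = (2:ℝ) ^ ((k:ℝ) * L + ((n:ℝ) - k) * L') := by
        rw [hWeq z, ← hkdef]
        conv_lhs => rw [h1δe, hδe]
        rw [← Real.rpow_natCast ((2:ℝ) ^ L) k,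
          ← Real.rpow_natCast ((2:ℝ) ^ L') (n - k),
          ← Real.rpow_mul (by norm_num), ← Real.rpow_mul (by norm_num),
          ← Real.rpow_add (by norm_num)]
        congr 1
        rw [Nat.cast_sub hkn]
        ring
      rw [hWz, Real.rpow_le_rpow_left_iff (by norm_num : (1:ℝ) < 2)]
      have hL : L ≤ L' :=
        Real.logb_le_logb_of_le (by norm_num : (1:ℝ) < 2) hδpos (by linarith)
      have hexp : -(binEnt δ * n) = (δ * n) * L + ((n:ℝ) - δ * n) * L' := by
        rw [hLdef, hL'def]
        unfold binEnt
        ring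
      rw [hexp]
      nlinarith [hzk, hL]
    -- card bound
    have hsum_ge : ((Finset.univ.filter (fun z : Fin n → Bool =>
          ((hammingDist x z : ℝ) ≤ δ * n))).card : ℝ) * (2:ℝ) ^ (-(binEnt δ * n))
        ≤ ∑ z ∈ Finset.univ.filter (fun z : Fin n → Bool => ((hammingDist x z : ℝ) ≤ δ * n)), W z := by
      have := Finset.card_nsmul_le_sum
        (Finset.univ.filter (fun z : Fin n → Bool => ((hammingDist x z : ℝ) ≤ δ * n))) W
        ((2:ℝ) ^ (-(binEnt δ * n))) hWge
      simpa [nsmul_eq_mul] using this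
    have hsum_le : ∑ z ∈ Finset.univ.filter (fun z : Fin n → Bool =>
          ((hammingDist x z : ℝ) ≤ δ * n)), W z ≤ 1 := by
      rw [← hWsum]
      exact Finset.sum_le_sum_of_subset_of_nonneg (Finset.subset_univ _)
        (fun z _ _ => hWnn z)
    have hpow : (0:ℝ) < (2:ℝ) ^ (-(binEnt δ * n)) := Real.rpow_pos_of_pos (by norm_num) _
    have hfinal := le_trans hsum_ge hsum_le
    rw [show (2:ℝ) ^ (binEnt δ * n) = ((2:ℝ) ^ (-(binEnt δ * n)))⁻¹ by
      rw [← Real.rpow_neg (by norm_num), neg_neg]]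
    rw [← one_div, le_div_iff₀ hpow]
    exact hfinal


lemma Vb_herm (θ : Fin n → Bool) (s : Finset (Fin n → Bool)) : (Vb θ s).IsHermitian := by
  unfold Matrix.IsHermitian Vb
  rw [Matrix.conjTranspose_sum]
  apply Finset.sum_congr rfl
  intro z _
  ext c c'
  simp only [Matrix.conjTranspose_apply, Matrix.vecMulVec_apply, Pi.star_apply, star_mul',
    star_star]
  ring

end Stmt16

open Stmt16 in
/-- For two distinct openings `(x,θ) ≠ (x',θ')` with `d(x,x') ≥ d` (same syndrome of a
distance-`d` code), and any density operator `ρ_B`: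
`Tr(V^δ_{x,θ} ρ_B) + Tr(V^δ_{x',θ'} ρ_B) ≤ 1 + 2^{−d/2 + δn + h(δ)n}`.
Consequently the BCJL_δ scheme is `2^{−d/2+δn+h(δ)n}`-binding against non-adaptive
adversaries. -/
theorem stmt16 {n d : ℕ} (δ : ℝ) (hδ0 : 0 ≤ δ) (hδ : δ ≤ 1 / 2)
    (x x' θ θ' : Fin n → Bool)
    (hne : (x, θ) ≠ (x', θ'))
    (hd : d ≤ hammingDist x x')
    (ρB : Matrix (Fin n → Bool) (Fin n → Bool) ℂ)
    (hρ : ρB.PosSemidef) (htr : ρB.trace = 1) :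
    (Vproj n δ x θ * ρB).trace.re + (Vproj n δ x' θ' * ρB).trace.re
      ≤ 1 + (2 : ℝ) ^ (-(d : ℝ) / 2 + δ * n + binEnt δ * n) := by
  classical
  set s : Finset (Fin n → Bool) :=
    Finset.univ.filter (fun z => ((hammingDist x z : ℝ) ≤ δ * n)) with hs
  set s' : Finset (Fin n → Bool) :=
    Finset.univ.filter (fun z => ((hammingDist x' z : ℝ) ≤ δ * n)) with hs'
  have hV : Vproj n δ x θ = Vb θ s := rfl
  have hV' : Vproj n δ x' θ' = Vb θ' s' := rfl
  set ε : ℝ := (2:ℝ) ^ (-(d:ℝ)/2 + δ * n + binEnt δ * n) with hε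
  have hε0 : 0 ≤ ε := le_of_lt (Real.rpow_pos_of_pos two_pos _)
  set γ : ℝ := (2:ℝ) ^ (-((d:ℝ) - 2 * (δ * n))/2) with hγ
  have hγ0 : 0 ≤ γ := le_of_lt (Real.rpow_pos_of_pos two_pos _)
  have hcard : (s.card : ℝ) ≤ (2:ℝ) ^ (binEnt δ * n) := ball_card_le δ hδ0 hδ x
  have hcard' : (s'.card : ℝ) ≤ (2:ℝ) ^ (binEnt δ * n) := ball_card_le δ hδ0 hδ x'
  have hγc : γ * (2:ℝ) ^ (binEnt δ * n) = ε := by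
    rw [hγ, hε, ← Real.rpow_add (by norm_num)]
    congr 1
    ring
  have hcard0 : (0:ℝ) ≤ (s.card : ℝ) := Nat.cast_nonneg _
  have hcard0' : (0:ℝ) ≤ (s'.card : ℝ) := Nat.cast_nonneg _
  have hγcard : γ^2 * s.card * s'.card ≤ ε^2 := by
    calc γ^2 * s.card * s'.card
        ≤ γ^2 * ((2:ℝ) ^ (binEnt δ * n)) * ((2:ℝ) ^ (binEnt δ * n)) := by
          have h2 : (0:ℝ) ≤ (2:ℝ) ^ (binEnt δ * n) := le_of_lt (Real.rpow_pos_of_pos two_pos _)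
          have h3 : (s.card:ℝ) * s'.card ≤ (2:ℝ) ^ (binEnt δ * n) * (2:ℝ) ^ (binEnt δ * n) :=
            mul_le_mul hcard hcard' hcard0' h2
          calc γ^2 * s.card * s'.card = γ^2 * ((s.card:ℝ) * s'.card) := by ring
            _ ≤ γ^2 * ((2:ℝ) ^ (binEnt δ * n) * (2:ℝ) ^ (binEnt δ * n)) :=
                mul_le_mul_of_nonneg_left h3 (sq_nonneg γ)
            _ = γ^2 * ((2:ℝ) ^ (binEnt δ * n)) * ((2:ℝ) ^ (binEnt δ * n)) := by ring
      _ = (γ * (2:ℝ) ^ (binEnt δ * n))^2 := by ring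
      _ = ε^2 := by rw [hγc]
  have hγcard' : γ^2 * s'.card * s.card ≤ ε^2 := by nlinarith [hγcard]
  have hPQ : ∀ w : (Fin n → Bool) → ℂ,
      nsq (Vb θ s *ᵥ (Vb θ' s' *ᵥ w)) ≤ ε^2 * nsq w := by
    intro w
    refine (nsq_VbVb_le θ θ' s s' w γ hγ0 ?_).trans ?_
    · intro z hz z' hz'
      exact overlap_bound δ x x' θ θ' z z' hd
        (Finset.mem_filter.mp hz).2 (Finset.mem_filter.mp hz').2
    · exact mul_le_mul_of_nonneg_right hγcard (nsq_nonneg w)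
  have hd' : d ≤ hammingDist x' x := by rwa [hammingDist_comm]
  have hQP : ∀ w : (Fin n → Bool) → ℂ,
      nsq (Vb θ' s' *ᵥ (Vb θ s *ᵥ w)) ≤ ε^2 * nsq w := by
    intro w
    refine (nsq_VbVb_le θ' θ s' s w γ hγ0 ?_).trans ?_
    · intro z' hz' z hz
      exact overlap_bound δ x' x θ' θ z' z hd'
        (Finset.mem_filter.mp hz').2 (Finset.mem_filter.mp hz).2
    · exact mul_le_mul_of_nonneg_right hγcard' (nsq_nonneg w)
  have hH : (Vb θ s + Vb θ' s').IsHermitian := (Vb_herm θ s).add (Vb_herm θ' s')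
  have hquad := quadform_le (Vb θ s + Vb θ' s') hH (1 + ε) (by linarith)
    (fun u hu lam heig => eig_le (Vb θ s) (Vb θ' s')
      (Vb_idem_mulVec θ s) (Vb_idem_mulVec θ' s')
      (nsq_Vb_le θ s) (nsq_Vb_le θ' s') ε hε0 hPQ hQP u hu lam heig)
  have htrace := trace_le (Vb θ s + Vb θ' s') (1 + ε) hquad ρB hρ htr
  have hsplit : ((Vb θ s + Vb θ' s') * ρB).trace.re
      = (Vproj n δ x θ * ρB).trace.re + (Vproj n δ x' θ' * ρB).trace.re := by
    rw [hV, hV', Matrix.add_mul, Matrix.trace_add, Complex.add_re]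
  rw [← hsplit]
  exact htrace
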